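/- Given a Clifford system, the three complex 8×8 matrices S_k = i γ_k ρ_k (k = 1, 2, 3) are Hermitian, satisfy S_k² = I, and pairwise commute; moreover, for every sign pattern (ι₁, ι₂, ι₃) ∈ {+1, −1}³ the joint eigenspace {v ∈ ℂ⁸ : S_k v = ι_k v for k = 1, 2, 3} has complex dimension exactly 1, so ℂ⁸ is the direct sum of the eight joint eigenlines. -/
import Mathlib


open Matrix

section RingHelpers_CS

variable {A : Type*} [Ring A] (g r g' r' x : A)

lemma gr_sq (hgr : r * g = -(g * r)) (hg : g * g = -1) (hr : r * r = -1) :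
    (g * r) * (g * r) = -1 := by
  have : (g * r) * (g * r) = g * ((r * g) * r) := by simp [mul_assoc]
  rw [this, hgr, neg_mul, mul_neg]
  have : g * (g * r * r) = (g * g) * (r * r) := by simp [mul_assoc]
  rw [this, hg, hr]; simp

lemma gr_comm (hgg' : g * g' = -(g' * g)) (hrr' : r * r' = -(r' * r))
    (hrg' : r * g' = -(g' * r)) (hgr' : g * r' = -(r' * g)) :
    (g * r) * (g' * r') = (g' * r') * (g * r) := by
  have e1 : (g * r) * (g' * r') = g * (r * (g' * r')) := by simp [mul_assoc]
  have e2 : r * (g' * r') = -(g' * (r * r')) := by rw [← mul_assoc, hrg', neg_mul, mul_assoc]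
  have e3 : g * -(g' * (r * r')) = -(g * g') * (r * r') := by simp [mul_assoc]
  rw [e1, e2, e3, hgg', neg_neg]
  calc (g' * g) * (r * r') = g' * (g * (r * r')) := by rw [mul_assoc]
    _ = g' * (g * -(r' * r)) := by rw [hrr']
    _ = g' * -((g * r') * r) := by simp [mul_assoc]
    _ = g' * -(-(r' * g) * r) := by rw [hgr']
    _ = g' * (r' * (g * r)) := by simp [mul_assoc]
    _ = (g' * r') * (g * r) := by rw [mul_assoc]

lemma x_comm_gr (hxg : x * g = -(g * x)) (hxr : x * r = -(r * x)) :
    x * (g * r) = (g * r) * x := by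
  calc x * (g * r) = (x * g) * r := by rw [mul_assoc]
    _ = -(g * (x * r)) := by rw [hxg]; simp [mul_assoc]
    _ = -(g * -(r * x)) := by rw [hxr]
    _ = (g * r) * x := by simp [mul_assoc]

lemma g_anticomm_gr (hgr : r * g = -(g * r)) :
    g * (g * r) = -((g * r) * g) := by
  calc g * (g * r) = g * -(r * g) := by rw [hgr]; simp
    _ = -((g * r) * g) := by simp [mul_assoc]

end RingHelpers_CS

/-- A *Clifford system*: real antisymmetric 8×8 matrices `γ₁,…,γ₄, ρ₁, ρ₂, ρ₃` and a
symmetric `Γ` obeying the algebraic relations (3.5) of the paper. -/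
structure CliffordSystem where
  γ : Fin 4 → Matrix (Fin 8) (Fin 8) ℝ
  ρ : Fin 3 → Matrix (Fin 8) (Fin 8) ℝ
  Γ : Matrix (Fin 8) (Fin 8) ℝ
  γ_antisymm : ∀ α, (γ α)ᵀ = -(γ α)
  ρ_antisymm : ∀ j, (ρ j)ᵀ = -(ρ j)
  Γ_symm : Γᵀ = Γ
  γγ : ∀ α β, γ α * γ β + γ β * γ α =
    if α = β then (-2 : ℝ) • (1 : Matrix (Fin 8) (Fin 8) ℝ) else 0
  ρρ : ∀ j k, ρ j * ρ k + ρ k * ρ j =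
    if j = k then (-2 : ℝ) • (1 : Matrix (Fin 8) (Fin 8) ℝ) else 0
  ργ : ∀ j α, ρ j * γ α + γ α * ρ j = 0
  Γγ : ∀ α, Γ * γ α + γ α * Γ = 0
  Γρ : ∀ j, Γ * ρ j = ρ j * Γ
  Γsq : Γ * Γ = 1

/-- The `γ` matrices acting ℂ-linearly on `ℂ⁸`. -/
noncomputable def CliffordSystem.γC (C : CliffordSystem) (α : Fin 4) :
    Matrix (Fin 8) (Fin 8) ℂ :=
  (C.γ α).map (fun r => (r : ℂ))

/-- The `ρ` matrices acting ℂ-linearly on `ℂ⁸`. -/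
noncomputable def CliffordSystem.ρC (C : CliffordSystem) (j : Fin 3) :
    Matrix (Fin 8) (Fin 8) ℂ :=
  (C.ρ j).map (fun r => (r : ℂ))

/-- The matrix `Γ` acting ℂ-linearly on `ℂ⁸`. -/
noncomputable def CliffordSystem.ΓC (C : CliffordSystem) : Matrix (Fin 8) (Fin 8) ℂ :=
  C.Γ.map (fun r => (r : ℂ))

/-- The Hermitian matrices `S_k = i γ_k ρ_k`, `k = 1,2,3`. -/
noncomputable def CliffordSystem.S (C : CliffordSystem) (k : Fin 3) :
    Matrix (Fin 8) (Fin 8) ℂ :=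
  Complex.I • (C.γC k.castSucc * C.ρC k)

/-- The joint eigenspace of `S₁, S₂, S₃` for a sign pattern `ι`. -/
noncomputable def CliffordSystem.jointEigenspace (C : CliffordSystem) (ι : Fin 3 → ℂ) :
    Submodule ℂ (Fin 8 → ℂ) :=
  ⨅ k : Fin 3, Module.End.eigenspace ((C.S k).mulVecLin) (ι k)

namespace CliffordSystem
variable (C : CliffordSystem)

private lemma mapC_mul (M N : Matrix (Fin 8) (Fin 8) ℝ) :
    (M * N).map (fun r => (r : ℂ)) = M.map (fun r => (r : ℂ)) * N.map (fun r => (r : ℂ)) :=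
  Matrix.map_mul (f := Complex.ofRealHom)

private lemma mapC_negone :
    ((-1 : Matrix (Fin 8) (Fin 8) ℝ)).map (fun r => (r : ℂ)) = -1 := by
  ext i j
  simp [Matrix.one_apply, apply_ite]

lemma γR_sq (α : Fin 4) : C.γ α * C.γ α = -1 := by
  have h := C.γγ α α
  rw [if_pos rfl] at h
  have h2 : (2 : ℝ) • (C.γ α * C.γ α) = (2 : ℝ) • (-1 : Matrix (Fin 8) (Fin 8) ℝ) := by
    rw [two_smul, h, smul_neg, neg_smul]
  exact smul_right_injective _ two_ne_zero h2

lemma ρR_sq (j : Fin 3) : C.ρ j * C.ρ j = -1 := by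
  have h := C.ρρ j j
  rw [if_pos rfl] at h
  have h2 : (2 : ℝ) • (C.ρ j * C.ρ j) = (2 : ℝ) • (-1 : Matrix (Fin 8) (Fin 8) ℝ) := by
    rw [two_smul, h, smul_neg, neg_smul]
  exact smul_right_injective _ two_ne_zero h2

lemma γC_sq (α : Fin 4) : C.γC α * C.γC α = -1 := by
  rw [CliffordSystem.γC, ← mapC_mul, C.γR_sq, mapC_negone]

lemma ρC_sq (j : Fin 3) : C.ρC j * C.ρC j = -1 := by
  rw [CliffordSystem.ρC, ← mapC_mul, C.ρR_sq, mapC_negone]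

lemma γC_anti {α β : Fin 4} (h : α ≠ β) : C.γC α * C.γC β = -(C.γC β * C.γC α) := by
  have hr : C.γ α * C.γ β = -(C.γ β * C.γ α) := by
    have := C.γγ α β
    rw [if_neg h] at this
    exact eq_neg_of_add_eq_zero_left this
  simp only [CliffordSystem.γC]
  rw [← mapC_mul, hr, ← mapC_mul]
  ext i j; simp

lemma ρC_anti {j k : Fin 3} (h : j ≠ k) : C.ρC j * C.ρC k = -(C.ρC k * C.ρC j) := by
  have hr : C.ρ j * C.ρ k = -(C.ρ k * C.ρ j) := by
    have := C.ρρ j k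
    rw [if_neg h] at this
    exact eq_neg_of_add_eq_zero_left this
  simp only [CliffordSystem.ρC]
  rw [← mapC_mul, hr, ← mapC_mul]
  ext i j; simp

lemma ργC_anti (j : Fin 3) (α : Fin 4) : C.ρC j * C.γC α = -(C.γC α * C.ρC j) := by
  have hr : C.ρ j * C.γ α = -(C.γ α * C.ρ j) := eq_neg_of_add_eq_zero_left (C.ργ j α)
  rw [CliffordSystem.ρC, CliffordSystem.γC, ← mapC_mul, hr, ← mapC_mul]
  ext i j; simp

lemma γρC_anti (j : Fin 3) (α : Fin 4) : C.γC α * C.ρC j = -(C.ρC j * C.γC α) := by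
  rw [C.ργC_anti j α, neg_neg]

lemma γC_conjTranspose (α : Fin 4) : (C.γC α)ᴴ = -(C.γC α) := by
  have := C.γ_antisymm α
  ext i j
  have h2 := congrFun (congrFun this j) i
  simp only [Matrix.transpose_apply, Matrix.neg_apply] at h2
  simp [CliffordSystem.γC, Matrix.conjTranspose_apply, Complex.conj_ofReal, h2]

lemma ρC_conjTranspose (j : Fin 3) : (C.ρC j)ᴴ = -(C.ρC j) := by
  have := C.ρ_antisymm j
  ext i k
  have h2 := congrFun (congrFun this k) i
  simp only [Matrix.transpose_apply, Matrix.neg_apply] at h2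
  simp [CliffordSystem.ρC, Matrix.conjTranspose_apply, Complex.conj_ofReal, h2]

lemma S_herm (k : Fin 3) : (C.S k)ᴴ = C.S k := by
  rw [CliffordSystem.S, Matrix.conjTranspose_smul, Matrix.conjTranspose_mul,
    C.γC_conjTranspose, C.ρC_conjTranspose]
  have : (-(C.ρC k)) * (-(C.γC k.castSucc)) = C.ρC k * C.γC k.castSucc := by simp
  rw [this, C.ργC_anti k k.castSucc]
  simp [Complex.star_def, Complex.conj_I]

lemma S_sq (k : Fin 3) : C.S k * C.S k = 1 := by
  rw [CliffordSystem.S, smul_mul_assoc, mul_smul_comm, smul_smul, Complex.I_mul_I,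
    gr_sq _ _ (C.ργC_anti k k.castSucc) (C.γC_sq k.castSucc) (C.ρC_sq k)]
  simp

lemma S_commute (j k : Fin 3) : C.S j * C.S k = C.S k * C.S j := by
  rcases eq_or_ne j k with rfl | h
  · rfl
  · rw [CliffordSystem.S, CliffordSystem.S, smul_mul_assoc, mul_smul_comm, smul_smul,
      smul_mul_assoc, mul_smul_comm, smul_smul]
    congr 1
    exact gr_comm _ _ _ _
      (C.γC_anti (α := j.castSucc) (β := k.castSucc) (fun hh => h (Fin.castSucc_injective 3 hh)))
      (C.ρC_anti h) (C.ργC_anti j k.castSucc) (C.γρC_anti k j.castSucc)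

lemma γS_comm {j k : Fin 3} (h : j ≠ k) :
    C.γC j.castSucc * C.S k = C.S k * C.γC j.castSucc := by
  rw [CliffordSystem.S, mul_smul_comm, smul_mul_assoc]
  congr 1
  exact x_comm_gr _ _ _
    (C.γC_anti (α := j.castSucc) (β := k.castSucc) (fun hh => h (Fin.castSucc_injective 3 hh)))
    (C.γρC_anti k j.castSucc)

lemma γS_anti (k : Fin 3) : C.S k * C.γC k.castSucc = -(C.γC k.castSucc * C.S k) := by
  have h1 : (C.γC k.castSucc * C.ρC k) * C.γC k.castSucc
      = -(C.γC k.castSucc * (C.γC k.castSucc * C.ρC k)) := by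
    rw [g_anticomm_gr _ _ (C.ργC_anti k k.castSucc), neg_neg]
  rw [CliffordSystem.S, smul_mul_assoc, h1, smul_neg, mul_smul_comm]

lemma mem_jointEigenspace {ι : Fin 3 → ℂ} {v : Fin 8 → ℂ} :
    v ∈ C.jointEigenspace ι ↔ ∀ k, C.S k *ᵥ v = ι k • v := by
  simp [CliffordSystem.jointEigenspace, Submodule.mem_iInf, Module.End.mem_eigenspace_iff]

lemma finrank_flip_le (ι : Fin 3 → ℂ) (k : Fin 3) :
    Module.finrank ℂ (C.jointEigenspace ι) ≤
      Module.finrank ℂ (C.jointEigenspace (Function.update ι k (-(ι k)))) := by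
  have hmaps : ∀ v ∈ C.jointEigenspace ι,
      (C.γC k.castSucc).mulVecLin v ∈ C.jointEigenspace (Function.update ι k (-(ι k))) := by
    intro v hv
    rw [C.mem_jointEigenspace] at hv ⊢
    intro j
    rcases eq_or_ne j k with rfl | hj
    · rw [Function.update_self, Matrix.mulVecLin_apply, Matrix.mulVec_mulVec, C.γS_anti j,
        Matrix.neg_mulVec, ← Matrix.mulVec_mulVec, hv j, Matrix.mulVec_smul, neg_smul]
    · rw [Function.update_of_ne hj, Matrix.mulVecLin_apply, Matrix.mulVec_mulVec,
        ← C.γS_comm (Ne.symm hj), ← Matrix.mulVec_mulVec, hv j, Matrix.mulVec_smul]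
  have hginj : Function.Injective (C.γC k.castSucc).mulVecLin := by
    intro a b hab
    have h2 := congrArg (fun w => C.γC k.castSucc *ᵥ w) hab
    simp only [Matrix.mulVecLin_apply, Matrix.mulVec_mulVec, C.γC_sq k.castSucc] at h2
    rw [show (-1 : Matrix (Fin 8) (Fin 8) ℂ) = -(1 : Matrix (Fin 8) (Fin 8) ℂ) from rfl,
      Matrix.neg_mulVec, Matrix.neg_mulVec, Matrix.one_mulVec, Matrix.one_mulVec] at h2
    exact neg_injective h2
  have hfinj : Function.Injective ((C.γC k.castSucc).mulVecLin.restrict hmaps) := by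
    intro a b hab
    have h3 := congrArg Subtype.val hab
    simp only [LinearMap.restrict_apply] at h3
    exact Subtype.ext (hginj h3)
  exact LinearMap.finrank_le_finrank_of_injective hfinj

lemma finrank_flip (ι : Fin 3 → ℂ) (k : Fin 3) :
    Module.finrank ℂ (C.jointEigenspace ι) =
      Module.finrank ℂ (C.jointEigenspace (Function.update ι k (-(ι k)))) := by
  refine le_antisymm (C.finrank_flip_le ι k) ?_
  have h := C.finrank_flip_le (Function.update ι k (-(ι k))) k
  rwa [Function.update_self, neg_neg, Function.update_idem, Function.update_eq_self] at h

/-- The auxiliary projector factors. -/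
noncomputable def Tm (k : Fin 3) (ε : ℂ) : Matrix (Fin 8) (Fin 8) ℂ :=
  1 + ε • C.S k

lemma S_mul_Tm (k : Fin 3) {ε : ℂ} (hε : ε * ε = 1) :
    C.S k * C.Tm k ε = ε • C.Tm k ε := by
  simp only [CliffordSystem.Tm, mul_add, mul_one, mul_smul_comm, C.S_sq k, smul_add, smul_smul,
    hε, one_smul]
  rw [add_comm]

lemma S_Tm_comm (j k : Fin 3) (ε : ℂ) : C.S j * C.Tm k ε = C.Tm k ε * C.S j := by
  simp only [CliffordSystem.Tm, mul_add, add_mul, mul_one, one_mul, mul_smul_comm,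
    smul_mul_assoc, C.S_commute j k]

lemma Tm_comm (j k : Fin 3) (ε δ : ℂ) : C.Tm j ε * C.Tm k δ = C.Tm k δ * C.Tm j ε := by
  simp only [CliffordSystem.Tm, mul_add, add_mul, mul_one, one_mul, mul_smul_comm,
    smul_mul_assoc, smul_add, smul_smul, C.S_commute j k, mul_comm δ ε]
  abel

lemma Tm_mulVec_fix (k : Fin 3) {ε : ℂ} (hε : ε * ε = 1) {v : Fin 8 → ℂ}
    (hv : C.S k *ᵥ v = ε • v) : C.Tm k ε *ᵥ v = (2 : ℂ) • v := by
  rw [CliffordSystem.Tm, Matrix.add_mulVec, Matrix.one_mulVec, Matrix.smul_mulVec, hv,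
    smul_smul, hε, one_smul, two_smul]

lemma Tm_mulVec_kill (k : Fin 3) {ε δ : ℂ} (hεδ : δ * ε = -1) {v : Fin 8 → ℂ}
    (hv : C.S k *ᵥ v = ε • v) : C.Tm k δ *ᵥ v = 0 := by
  rw [CliffordSystem.Tm, Matrix.add_mulVec, Matrix.one_mulVec, Matrix.smul_mulVec, hv,
    smul_smul, hεδ, neg_one_smul, add_neg_cancel]

/-- Sign vector of a boolean pattern. -/
def sgn (b : Fin 3 → Bool) : Fin 3 → ℂ := fun k => if b k then 1 else -1

lemma sgn_mul_self (b : Fin 3 → Bool) (k : Fin 3) : sgn b k * sgn b k = 1 := by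
  unfold sgn; rcases b k <;> norm_num

lemma sgn_valid (b : Fin 3 → Bool) (k : Fin 3) : sgn b k = 1 ∨ sgn b k = -1 := by
  unfold sgn; rcases b k <;> simp

/-- The (rescaled) spectral projectors. -/
noncomputable def Pm (b : Fin 3 → Bool) : Matrix (Fin 8) (Fin 8) ℂ :=
  C.Tm 0 (sgn b 0) * (C.Tm 1 (sgn b 1) * C.Tm 2 (sgn b 2))

lemma S_mul_Pm (b : Fin 3 → Bool) (k : Fin 3) :
    C.S k * C.Pm b = sgn b k • C.Pm b := by
  fin_cases k
  · show C.S 0 * C.Pm b = sgn b 0 • C.Pm b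
    rw [CliffordSystem.Pm, ← mul_assoc, C.S_mul_Tm 0 (sgn_mul_self b 0), smul_mul_assoc]
  · show C.S 1 * C.Pm b = sgn b 1 • C.Pm b
    rw [CliffordSystem.Pm, ← mul_assoc, C.S_Tm_comm 1 0, mul_assoc, ← mul_assoc (C.S 1),
      C.S_mul_Tm 1 (sgn_mul_self b 1), smul_mul_assoc, ← smul_mul_assoc, smul_mul_assoc,
      mul_smul_comm, ← mul_assoc]
  · show C.S 2 * C.Pm b = sgn b 2 • C.Pm b
    rw [CliffordSystem.Pm, ← mul_assoc, C.S_Tm_comm 2 0, mul_assoc, ← mul_assoc (C.S 2),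
      C.S_Tm_comm 2 1, mul_assoc (C.Tm 1 (sgn b 1)), C.S_mul_Tm 2 (sgn_mul_self b 2),
      mul_smul_comm, mul_smul_comm]

lemma Pm_mulVec_mem (b : Fin 3 → Bool) (v : Fin 8 → ℂ) :
    C.Pm b *ᵥ v ∈ C.jointEigenspace (sgn b) := by
  rw [C.mem_jointEigenspace]
  intro k
  rw [Matrix.mulVec_mulVec, C.S_mul_Pm b k, Matrix.smul_mulVec]

lemma Pm_fix (b : Fin 3 → Bool) {v : Fin 8 → ℂ} (hv : v ∈ C.jointEigenspace (sgn b)) :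
    C.Pm b *ᵥ v = (8 : ℂ) • v := by
  rw [C.mem_jointEigenspace] at hv
  rw [CliffordSystem.Pm, ← Matrix.mulVec_mulVec, ← Matrix.mulVec_mulVec,
    C.Tm_mulVec_fix 2 (sgn_mul_self b 2) (hv 2), Matrix.mulVec_smul,
    C.Tm_mulVec_fix 1 (sgn_mul_self b 1) (hv 1), Matrix.mulVec_smul, Matrix.mulVec_smul,
    C.Tm_mulVec_fix 0 (sgn_mul_self b 0) (hv 0), smul_smul, smul_smul]
  norm_num

lemma Pm_kill {b b' : Fin 3 → Bool} (hne : b ≠ b') {v : Fin 8 → ℂ}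
    (hv : v ∈ C.jointEigenspace (sgn b')) : C.Pm b *ᵥ v = 0 := by
  rw [C.mem_jointEigenspace] at hv
  obtain ⟨k, hk⟩ := Function.ne_iff.mp hne
  have hδε : sgn b k * sgn b' k = -1 := by
    unfold sgn
    rcases hb : b k <;> rcases hb' : b' k <;> simp_all
  have h0 : C.Tm k (sgn b k) *ᵥ v = 0 := C.Tm_mulVec_kill k hδε (hv k)
  fin_cases k
  all_goals simp only [Fin.zero_eta, Fin.mk_one] at h0 ⊢
  · have hcomm : C.Tm 0 (sgn b 0) * (C.Tm 1 (sgn b 1) * C.Tm 2 (sgn b 2))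
        = C.Tm 1 (sgn b 1) * (C.Tm 2 (sgn b 2) * C.Tm 0 (sgn b 0)) := by
      rw [← mul_assoc, C.Tm_comm 0 1, mul_assoc, C.Tm_comm 0 2]
    rw [CliffordSystem.Pm, hcomm, ← Matrix.mulVec_mulVec, ← Matrix.mulVec_mulVec, h0,
      Matrix.mulVec_zero, Matrix.mulVec_zero]
  · rw [CliffordSystem.Pm, C.Tm_comm 1 2, ← Matrix.mulVec_mulVec, ← Matrix.mulVec_mulVec, h0,
      Matrix.mulVec_zero, Matrix.mulVec_zero]
  · have h2 : C.Tm 2 (sgn b 2) *ᵥ v = 0 := h0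
    rw [CliffordSystem.Pm, ← Matrix.mulVec_mulVec, ← Matrix.mulVec_mulVec, h2,
      Matrix.mulVec_zero, Matrix.mulVec_zero]

lemma Tm_one_add (k : Fin 3) : C.Tm k 1 + C.Tm k (-1) = (2 : ℂ) • 1 := by
  simp only [CliffordSystem.Tm, one_smul, neg_one_smul, two_smul]
  abel

lemma Pm_sum :
    C.Pm ![true, true, true] + C.Pm ![true, true, false] + C.Pm ![true, false, true]
      + C.Pm ![true, false, false] + C.Pm ![false, true, true] + C.Pm ![false, true, false]
      + C.Pm ![false, false, true] + C.Pm ![false, false, false] = (8 : ℂ) • 1 := by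
  have key : C.Pm ![true, true, true] + C.Pm ![true, true, false] + C.Pm ![true, false, true]
      + C.Pm ![true, false, false] + C.Pm ![false, true, true] + C.Pm ![false, true, false]
      + C.Pm ![false, false, true] + C.Pm ![false, false, false]
      = (C.Tm 0 1 + C.Tm 0 (-1)) * ((C.Tm 1 1 + C.Tm 1 (-1)) * (C.Tm 2 1 + C.Tm 2 (-1))) := by
    simp only [CliffordSystem.Pm, sgn, Matrix.cons_val_zero, Matrix.cons_val_one,
      Matrix.head_cons, Matrix.cons_val_two, Matrix.tail_cons, if_true, if_false,
      Bool.false_eq_true]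
    noncomm_ring
  rw [key, C.Tm_one_add 0, C.Tm_one_add 1, C.Tm_one_add 2]
  simp only [smul_mul_assoc, mul_smul_comm, smul_smul, one_mul, mul_one]
  norm_num

end CliffordSystem

/-- The matrices `S_k = i γ_k ρ_k` are Hermitian, square to the identity,
pairwise commute, each joint eigenspace for a sign pattern in `{±1}³` is a complex line,
and `ℂ⁸` is the internal direct sum of the eight joint eigenlines. -/
theorem clifford_joint_eigenlines (C : CliffordSystem) :
    (∀ k, (C.S k)ᴴ = C.S k) ∧
    (∀ k, C.S k * C.S k = 1) ∧
    (∀ j k, C.S j * C.S k = C.S k * C.S j) ∧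
    (∀ ι : Fin 3 → ℂ, (∀ k, ι k = 1 ∨ ι k = -1) →
      Module.finrank ℂ (C.jointEigenspace ι) = 1) ∧
    DirectSum.IsInternal (fun b : Fin 3 → Bool =>
      C.jointEigenspace (fun k => if b k then 1 else -1)) := by
  classical
  -- the theorem's sign function agrees with `sgn`
  have hsgn : ∀ b : Fin 3 → Bool,
      (fun k => if b k then (1 : ℂ) else -1) = CliffordSystem.sgn b := fun _ => rfl
  -- supremum is everything
  have htop : (⨆ b : Fin 3 → Bool,
      C.jointEigenspace (fun k => if b k then 1 else -1)) = ⊤ := by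
    rw [eq_top_iff]
    intro v _
    have hsum := congrArg (fun M => M *ᵥ v) C.Pm_sum
    simp only [Matrix.add_mulVec, Matrix.smul_mulVec, Matrix.one_mulVec] at hsum
    have h8 : v = (8 : ℂ)⁻¹ • ((8 : ℂ) • v) := by rw [smul_smul]; norm_num
    rw [h8, ← hsum]
    have hmem : ∀ b : Fin 3 → Bool, C.Pm b *ᵥ v ∈
        ⨆ b' : Fin 3 → Bool, C.jointEigenspace (fun k => if b' k then 1 else -1) := by
      intro b
      refine Submodule.mem_iSup_of_mem b ?_
      rw [hsgn b]
      exact C.Pm_mulVec_mem b v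
    exact Submodule.smul_mem _ _ (add_mem (add_mem (add_mem (add_mem (add_mem (add_mem
      (add_mem (hmem _) (hmem _)) (hmem _)) (hmem _)) (hmem _)) (hmem _)) (hmem _)) (hmem _))
  -- independence
  have hind : iSupIndep (fun b : Fin 3 → Bool =>
      C.jointEigenspace (fun k => if b k then 1 else -1)) := by
    rw [iSupIndep_def]
    intro b
    rw [Submodule.disjoint_def]
    intro v hv1 hv2
    rw [hsgn b] at hv1
    have h1 : C.Pm b *ᵥ v = (8 : ℂ) • v := C.Pm_fix b hv1
    have hker : (⨆ (b' : Fin 3 → Bool) (_ : b' ≠ b),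
        C.jointEigenspace (fun k => if b' k then 1 else -1)) ≤
        LinearMap.ker (C.Pm b).mulVecLin := by
      refine iSup_le fun b' => iSup_le fun hb' => fun w hw => ?_
      rw [LinearMap.mem_ker, Matrix.mulVecLin_apply]
      rw [hsgn b'] at hw
      exact C.Pm_kill (Ne.symm hb') hw
    have h2 := hker hv2
    rw [LinearMap.mem_ker, Matrix.mulVecLin_apply, h1] at h2
    exact (smul_eq_zero.mp h2).resolve_left (by norm_num)
  have hinternal : DirectSum.IsInternal (fun b : Fin 3 → Bool =>
      C.jointEigenspace (fun k => if b k then 1 else -1)) :=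
    DirectSum.isInternal_submodule_of_iSupIndep_of_iSup_eq_top hind htop
  -- all the joint eigenspaces with ±1 signs have the same dimension
  have hstep : ∀ (ι : Fin 3 → ℂ) (k : Fin 3), (ι k = 1 ∨ ι k = -1) →
      Module.finrank ℂ (C.jointEigenspace ι) =
        Module.finrank ℂ (C.jointEigenspace (Function.update ι k 1)) := by
    intro ι k h
    rcases h with h | h
    · rw [← h, Function.update_eq_self]
    · have hf := C.finrank_flip ι k
      rwa [h, show -(-1 : ℂ) = 1 by norm_num] at hf
  have hconst : ∀ ι : Fin 3 → ℂ, (∀ k, ι k = 1 ∨ ι k = -1) →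
      Module.finrank ℂ (C.jointEigenspace ι) =
        Module.finrank ℂ (C.jointEigenspace (fun _ => (1 : ℂ))) := by
    intro ι hι
    have h0 := hstep ι 0 (hι 0)
    have h1 := hstep (Function.update ι 0 1) 1 (by
      rw [Function.update_of_ne (by decide : (1 : Fin 3) ≠ 0)]; exact hι 1)
    have h2 := hstep (Function.update (Function.update ι 0 1) 1 1) 2 (by
      rw [Function.update_of_ne (by decide : (2 : Fin 3) ≠ 1),
        Function.update_of_ne (by decide : (2 : Fin 3) ≠ 0)]; exact hι 2)
    have hfun : Function.update (Function.update (Function.update ι 0 1) 1 1) 2 1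
        = fun _ => (1 : ℂ) := by
      funext k
      fin_cases k <;> simp [Function.update]
    rw [h0, h1, h2, hfun]
  -- sum of dimensions is 8
  have hsum8 : ∑ b : Fin 3 → Bool, Module.finrank ℂ
      (C.jointEigenspace (fun k => if b k then 1 else -1)) = 8 := by
    have heq := (LinearEquiv.ofBijective (DirectSum.coeLinearMap (fun b : Fin 3 → Bool =>
      C.jointEigenspace (fun k => if b k then 1 else -1))) hinternal).finrank_eq
    rw [Module.finrank_directSum, Module.finrank_pi] at heq
    simpa using heq
  -- hence the common dimension is 1
  have hd1 : Module.finrank ℂ (C.jointEigenspace (fun _ => (1 : ℂ))) = 1 := by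
    have hall : ∀ b : Fin 3 → Bool, Module.finrank ℂ
        (C.jointEigenspace (fun k => if b k then 1 else -1)) =
        Module.finrank ℂ (C.jointEigenspace (fun _ => (1 : ℂ))) := by
      intro b
      exact hconst _ (fun k => by by_cases h : b k <;> simp [h])
    rw [Finset.sum_congr rfl (fun b _ => hall b), Finset.sum_const] at hsum8
    simp only [Finset.card_univ, smul_eq_mul] at hsum8
    have hcard : Fintype.card (Fin 3 → Bool) = 8 := by simp [Fintype.card_fun]
    rw [hcard] at hsum8
    omega
  refine ⟨C.S_herm, C.S_sq, C.S_commute, ?_, hinternal⟩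
  intro ι hι
  rw [hconst ι hι, hd1]
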